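/- Let b, q be coprime integers with q ≥ 1. Then for every integer n, e(bn/q) = ∑_{q = q₁q₂} ∑_{χ mod q₁} c_{b,χ} · 1_{q₂ | n} · χ(n/q₂), where c_{b,χ} := (1/φ(q₁)) ∑_{x mod q₁} conj(χ(x)) e(bx/q₁), the outer sum is over factorizations q = q₁q₂ into positive integers, the inner sum is over Dirichlet characters χ of modulus q₁, and |c_{b,χ}| ≤ 1 for every χ. -/

import Mathlib

open Finset

/-- `e(x) = e^{2πix}`. -/
noncomputable def e (x : ℝ) : ℂ := Complex.exp (2 * Real.pi * Complex.I * x)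

/-- The normalized Gauss sum `c_{b,χ} = φ(q₁)⁻¹ ∑_{x mod q₁} conj(χ(x)) e(bx/q₁)`. -/
noncomputable def gaussCoeff (b : ℤ) (q₁ : ℕ) (χ : DirichletCharacter ℂ q₁) : ℂ :=
  (1 / (q₁.totient : ℂ)) *
    ∑ x ∈ Finset.range q₁, (starRingEnd ℂ) (χ ((x : ℕ) : ZMod q₁)) * e ((b : ℝ) * x / q₁)

/-- Fourier decomposition of `e(bn/q)` into Dirichlet characters over the
factorizations `q = q₁ q₂` (with `q₂ = q / q₁` for `q₁ ∣ q`), together with the bound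
`|c_{b,χ}| ≤ 1`. -/
lemma e_add (x y : ℝ) : e (x + y) = e x * e y := by
  simp only [e, ← Complex.exp_add]
  congr 1
  push_cast
  ring

lemma e_int (k : ℤ) : e k = 1 := by
  have := Complex.exp_int_mul_two_pi_mul_I k
  rw [e, show 2 * (Real.pi : ℂ) * Complex.I * ((k : ℝ) : ℂ) = (k : ℂ) * (2 * (Real.pi : ℂ) * Complex.I) by push_cast; ring]
  exact this

lemma e_norm (x : ℝ) : ‖e x‖ = 1 := by
  rw [e, show 2 * (Real.pi : ℂ) * Complex.I * ((x : ℝ) : ℂ) = ((2 * Real.pi * x : ℝ) : ℂ) * Complex.I by push_cast; ring]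
  rw [Complex.norm_exp_ofReal_mul_I]

lemma sum_range_zmod {M : Type*} [AddCommMonoid M] {q₁ : ℕ} [NeZero q₁] (g : ZMod q₁ → M) :
    ∑ x ∈ Finset.range q₁, g ((x : ℕ) : ZMod q₁) = ∑ y : ZMod q₁, g y := by
  refine Finset.sum_nbij' (fun x => ((x : ℕ) : ZMod q₁)) (fun y => y.val) ?_ ?_ ?_ ?_ ?_
  · intro a _; exact Finset.mem_univ _
  · intro y _; exact Finset.mem_range.mpr (ZMod.val_lt y)
  · intro a ha; exact ZMod.val_cast_of_lt (Finset.mem_range.mp ha)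
  · intro y _; exact ZMod.natCast_zmod_val y
  · intro a _; rfl

lemma card_filter_isUnit (q₁ : ℕ) [NeZero q₁] [DecidablePred fun y : ZMod q₁ => IsUnit y] :
    (Finset.univ.filter fun y : ZMod q₁ => IsUnit y).card = Fintype.card (ZMod q₁)ˣ := by
  rw [Fintype.card, ← Finset.card_image_of_injective Finset.univ (Units.val_injective : Function.Injective (Units.val : (ZMod q₁)ˣ → ZMod q₁))]
  congr 1
  ext y
  simp [IsUnit, eq_comm]

lemma gaussCoeff_norm_le (q₁ : ℕ) (h : q₁ ≠ 0) (b : ℤ) (χ : DirichletCharacter ℂ q₁) :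
    ‖gaussCoeff b q₁ χ‖ ≤ 1 := by
  haveI : NeZero q₁ := ⟨h⟩
  classical
  have hφ : 0 < (q₁.totient : ℝ) := by exact_mod_cast Nat.totient_pos.mpr (Nat.pos_of_ne_zero h)
  rw [gaussCoeff, norm_mul]
  have h1 : ‖(1 / (q₁.totient : ℂ))‖ = 1 / (q₁.totient : ℝ) := by
    simp [norm_div]
  rw [h1]
  have h2 : ‖∑ x ∈ Finset.range q₁, (starRingEnd ℂ) (χ ((x : ℕ) : ZMod q₁)) * e ((b : ℝ) * x / q₁)‖
      ≤ (q₁.totient : ℝ) := by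
    calc ‖∑ x ∈ Finset.range q₁, (starRingEnd ℂ) (χ ((x : ℕ) : ZMod q₁)) * e ((b : ℝ) * x / q₁)‖
        ≤ ∑ x ∈ Finset.range q₁, ‖(starRingEnd ℂ) (χ ((x : ℕ) : ZMod q₁)) * e ((b : ℝ) * x / q₁)‖ :=
          norm_sum_le _ _
      _ = ∑ x ∈ Finset.range q₁, ‖χ ((x : ℕ) : ZMod q₁)‖ := by
          refine Finset.sum_congr rfl fun x _ => ?_
          rw [norm_mul, e_norm, mul_one, RCLike.norm_conj]
      _ = ∑ y : ZMod q₁, ‖χ y‖ := sum_range_zmod (fun y => ‖χ y‖)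
      _ ≤ ∑ y : ZMod q₁, (if IsUnit y then (1:ℝ) else 0) := by
          refine Finset.sum_le_sum fun y _ => ?_
          by_cases hy : IsUnit y
          · simp only [hy, if_true]; simpa using χ.norm_le_one y
          · simp [hy, χ.map_nonunit hy]
      _ = (q₁.totient : ℝ) := by
          rw [Finset.sum_boole, card_filter_isUnit, ZMod.card_units_eq_totient]
  calc (1 / (q₁.totient : ℝ)) * ‖_‖ ≤ (1 / (q₁.totient : ℝ)) * (q₁.totient : ℝ) := by
        apply mul_le_mul_of_nonneg_left h2 (by positivity)
    _ = 1 := by field_simp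

lemma conj_char {q₁ : ℕ} [NeZero q₁] (χ : DirichletCharacter ℂ q₁) {x : ZMod q₁} (hx : IsUnit x) :
    (starRingEnd ℂ) (χ x) = χ x⁻¹ := by
  have h1 : χ x⁻¹ * χ x = 1 := by rw [← map_mul, ZMod.inv_mul_of_unit x hx, map_one]
  rw [show (starRingEnd ℂ) (χ x) = star (χ x) from rfl, MulChar.star_apply',
    MulChar.inv_apply_eq_inv']
  exact (eq_inv_of_mul_eq_one_left h1).symm

lemma innerCharSum (q₁ : ℕ) [NeZero q₁] (b m : ℤ) :
    ∑ χ : DirichletCharacter ℂ q₁, gaussCoeff b q₁ χ * χ ((m : ZMod q₁)) =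
      if IsUnit ((m : ZMod q₁)) then e ((b : ℝ) * (m : ℝ) / q₁) else 0 := by
  classical
  have hq₁ : q₁ ≠ 0 := NeZero.ne q₁
  have hq₁R : (q₁ : ℝ) ≠ 0 := Nat.cast_ne_zero.mpr hq₁
  have hφ : (q₁.totient : ℂ) ≠ 0 := by
    exact_mod_cast (Nat.totient_pos.mpr (Nat.pos_of_ne_zero hq₁)).ne'
  have key : ∀ x : ZMod q₁,
      ∑ χ : DirichletCharacter ℂ q₁, (starRingEnd ℂ) (χ x) * χ ((m : ZMod q₁)) =
        if x = (m : ZMod q₁) ∧ IsUnit ((m : ZMod q₁)) then (q₁.totient : ℂ) else 0 := by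
    intro x
    by_cases hx : IsUnit x
    · simp_rw [conj_char _ hx]
      rw [DirichletCharacter.sum_char_inv_mul_char_eq ℂ hx ((m : ZMod q₁))]
      by_cases hxm : x = (m : ZMod q₁)
      · rw [if_pos hxm, if_pos ⟨hxm, hxm ▸ hx⟩]
      · rw [if_neg hxm, if_neg (fun h => hxm h.1)]
    · rw [if_neg (by rintro ⟨rfl, h2⟩; exact hx h2)]
      refine Finset.sum_eq_zero fun χ _ => ?_
      rw [χ.map_nonunit hx, map_zero, zero_mul]
  have swap : ∑ χ : DirichletCharacter ℂ q₁, gaussCoeff b q₁ χ * χ ((m : ZMod q₁)) =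
      (1 / (q₁.totient : ℂ)) * ∑ x ∈ Finset.range q₁,
        e ((b : ℝ) * x / q₁) *
          ∑ χ : DirichletCharacter ℂ q₁,
            (starRingEnd ℂ) (χ ((x : ℕ) : ZMod q₁)) * χ ((m : ZMod q₁)) := by
    simp_rw [gaussCoeff, Finset.mul_sum, Finset.sum_mul]
    rw [Finset.sum_comm]
    refine Finset.sum_congr rfl fun x _ => Finset.sum_congr rfl fun χ _ => by ring
  rw [swap]
  simp_rw [key]
  by_cases hm : IsUnit ((m : ZMod q₁))
  · simp only [hm, and_true, if_true]
    rw [Finset.sum_eq_single ((m : ZMod q₁)).val]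
    · rw [if_pos (ZMod.natCast_zmod_val _)]
      have hdvd : (q₁ : ℤ) ∣ m - ((m : ZMod q₁)).val := by
        rw [← ZMod.intCast_zmod_eq_zero_iff_dvd]
        push_cast
        rw [ZMod.natCast_zmod_val]
        ring
      obtain ⟨k, hk⟩ := hdvd
      have hm' : (m : ℝ) = ((((m : ZMod q₁)).val : ℕ) : ℝ) + (q₁ : ℝ) * (k : ℝ) := by
        have h2 : (m : ℝ) - ((((m : ZMod q₁)).val : ℕ) : ℝ) = (q₁ : ℝ) * (k : ℝ) := by
          exact_mod_cast congrArg (Int.cast : ℤ → ℝ) hk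
        linarith
      have he : e ((b : ℝ) * ((((m : ZMod q₁)).val : ℕ) : ℝ) / q₁) = e ((b : ℝ) * (m : ℝ) / q₁) := by
        rw [show (b : ℝ) * (m : ℝ) / q₁
            = (b : ℝ) * ((((m : ZMod q₁)).val : ℕ) : ℝ) / q₁ + ((b * k : ℤ) : ℝ) by
              rw [hm']; push_cast; field_simp,
          e_add, e_int, mul_one]
      rw [he]
      field_simp
    · intro x hx hne
      rw [if_neg, mul_zero]
      intro hcast
      exact hne (by rw [← hcast, ZMod.val_cast_of_lt (Finset.mem_range.mp hx)])
    · intro h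
      exact absurd (Finset.mem_range.mpr (ZMod.val_lt _)) h
  · simp [hm]

lemma isUnit_intCast_iff (q₁ : ℕ) (m : ℤ) : IsUnit ((m : ZMod q₁)) ↔ Int.gcd m q₁ = 1 := by
  rcases Int.natAbs_eq m with h | h
  · rw [h, Int.cast_natCast, ZMod.isUnit_iff_coprime, Int.gcd_natCast_natCast]
  · rw [h, Int.cast_neg, Int.cast_natCast, IsUnit.neg_iff, ZMod.isUnit_iff_coprime,
      Int.neg_gcd, Int.gcd_natCast_natCast]

theorem stmt16 (q : ℕ) (hq : 1 ≤ q) (b : ℤ) (hb : Int.gcd b q = 1) :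
    (∀ n : ℤ,
      e ((b : ℝ) * (n : ℝ) / q) =
        ∑ q₁ ∈ q.divisors, ∑ χ : DirichletCharacter ℂ q₁,
          gaussCoeff b q₁ χ *
            (if ((q / q₁ : ℕ) : ℤ) ∣ n then χ (((n / ((q / q₁ : ℕ) : ℤ)) : ℤ) : ZMod q₁)
             else 0)) ∧
    (∀ q₁ ∈ q.divisors, ∀ χ : DirichletCharacter ℂ q₁, ‖gaussCoeff b q₁ χ‖ ≤ 1) := by
  classical
  have hq0 : q ≠ 0 := Nat.one_le_iff_ne_zero.mp hq
  constructor
  · intro n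
    symm
    have hstep : ∀ q₁ ∈ q.divisors,
        (∑ χ : DirichletCharacter ℂ q₁, gaussCoeff b q₁ χ *
          (if ((q / q₁ : ℕ) : ℤ) ∣ n then χ (((n / ((q / q₁ : ℕ) : ℤ)) : ℤ) : ZMod q₁) else 0))
        = if ((((q / q₁ : ℕ) : ℤ) ∣ n) ∧ IsUnit (((n / ((q / q₁ : ℕ) : ℤ)) : ℤ) : ZMod q₁))
            then e ((b : ℝ) * (n : ℝ) / q) else 0 := by
      intro q₁ hq₁
      have hq₁0 : q₁ ≠ 0 := (Nat.pos_of_mem_divisors hq₁).ne'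
      haveI : NeZero q₁ := ⟨hq₁0⟩
      have hdq : q₁ ∣ q := (Nat.mem_divisors.mp hq₁).1
      have hq₂0 : q / q₁ ≠ 0 :=
        (Nat.div_pos (Nat.le_of_dvd (Nat.pos_of_ne_zero hq0) hdq)
          (Nat.pos_of_ne_zero hq₁0)).ne'
      have hmul : q₁ * (q / q₁) = q := Nat.mul_div_cancel' hdq
      by_cases hdvd : ((q / q₁ : ℕ) : ℤ) ∣ n
      · simp only [if_pos hdvd]
        rw [innerCharSum q₁ b (n / ((q / q₁ : ℕ) : ℤ))]
        have harg : (b : ℝ) * (((n / ((q / q₁ : ℕ) : ℤ)) : ℤ) : ℝ) / q₁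
            = (b : ℝ) * (n : ℝ) / q := by
          rw [Int.cast_div_charZero hdvd]
          rw [← hmul]
          have h1 : ((q₁ : ℕ) : ℝ) ≠ 0 := Nat.cast_ne_zero.mpr hq₁0
          have h2 : (((q / q₁ : ℕ) : ℤ) : ℝ) ≠ 0 := by
            exact_mod_cast Nat.cast_ne_zero.mpr hq₂0
          simp only [Nat.mul_div_cancel_left _ (Nat.pos_of_ne_zero hq₁0), Nat.cast_mul, Int.cast_natCast]
          field_simp
        rw [harg]
        simp only [hdvd, true_and]
      · simp only [if_neg hdvd, mul_zero, Finset.sum_const_zero]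
        rw [if_neg (fun h => hdvd h.1)]
    rw [Finset.sum_congr rfl hstep]
    have hd0 : Int.gcd n q ≠ 0 := fun h => hq0 (by
      have := (Int.gcd_eq_zero_iff.mp h).2
      exact_mod_cast this)
    have hdq : Int.gcd n q ∣ q := by
      have := Int.gcd_dvd_right (a := n) (b := (q : ℤ))
      exact_mod_cast this
    have hQ : q / Int.gcd n q ∈ q.divisors :=
      Nat.mem_divisors.mpr ⟨Nat.div_dvd_of_dvd hdq, hq0⟩
    have hqQ : q / (q / Int.gcd n q) = Int.gcd n q := Nat.div_div_self hdq hq0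
    have hzero : ∀ q₁ ∈ q.divisors, q₁ ≠ q / Int.gcd n q →
        (if ((((q / q₁ : ℕ) : ℤ) ∣ n) ∧ IsUnit (((n / ((q / q₁ : ℕ) : ℤ)) : ℤ) : ZMod q₁))
          then e ((b : ℝ) * (n : ℝ) / q) else 0) = 0 := by
      intro q₁ hq₁mem hne
      rw [if_neg]
      rintro ⟨hdvd, hunit⟩
      apply hne
      have hq₁0 : q₁ ≠ 0 := (Nat.pos_of_mem_divisors hq₁mem).ne'
      have hdq₁ : q₁ ∣ q := (Nat.mem_divisors.mp hq₁mem).1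
      have hmul : q₁ * (q / q₁) = q := Nat.mul_div_cancel' hdq₁
      have hq₂0 : q / q₁ ≠ 0 := fun h => hq0 (by rw [← hmul, h, mul_zero])
      have hgcd1 : Int.gcd (n / ((q / q₁ : ℕ) : ℤ)) q₁ = 1 :=
        (isUnit_intCast_iff _ _).mp hunit
      have hn : n = ((q / q₁ : ℕ) : ℤ) * (n / ((q / q₁ : ℕ) : ℤ)) :=
        (Int.mul_ediv_cancel' hdvd).symm
      have hq' : (q : ℤ) = ((q / q₁ : ℕ) : ℤ) * (q₁ : ℤ) := by
        rw [← Nat.cast_mul, mul_comm q₁ _] at *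
        exact_mod_cast (congrArg (Nat.cast : ℕ → ℤ) hmul).symm
      have hdd : Int.gcd n q = q / q₁ := by
        rw [hn] at hd0 ⊢
        calc Int.gcd (((q / q₁ : ℕ) : ℤ) * (n / ((q / q₁ : ℕ) : ℤ))) q
            = Int.gcd (((q / q₁ : ℕ) : ℤ) * (n / ((q / q₁ : ℕ) : ℤ)))
              (((q / q₁ : ℕ) : ℤ) * (q₁ : ℤ)) := by rw [← hq']
          _ = ((q / q₁ : ℕ) : ℤ).natAbs * Int.gcd (n / ((q / q₁ : ℕ) : ℤ)) (q₁ : ℤ) :=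
              Int.gcd_mul_left _ _ _
          _ = q / q₁ := by rw [hgcd1, Int.natAbs_natCast, mul_one]
      rw [hdd]
      exact (Nat.div_div_self hdq₁ hq0).symm
    rw [Finset.sum_eq_single_of_mem _ hQ hzero, hqQ]
    have h1 : ((Int.gcd n q : ℕ) : ℤ) ∣ n := Int.gcd_dvd_left _ _
    have h2 : IsUnit (((n / ((Int.gcd n q : ℕ) : ℤ)) : ℤ) : ZMod (q / Int.gcd n q)) := by
      rw [isUnit_intCast_iff]
      have hpos : 0 < Int.gcd n (q : ℤ) := Nat.pos_of_ne_zero hd0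
      have := Int.gcd_div_gcd_div_gcd (i := n) (j := (q : ℤ)) hpos
      have hQint : ((q / Int.gcd n q : ℕ) : ℤ) = (q : ℤ) / ((Int.gcd n q : ℕ) : ℤ) :=
        Int.natCast_ediv q (Int.gcd n q)
      rw [hQint]
      exact this
    rw [if_pos ⟨h1, h2⟩]
  · intro q₁ hq₁ χ
    exact gaussCoeff_norm_le q₁ (Nat.pos_of_mem_divisors hq₁).ne' b χ
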